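/- Let a, b, c ∈ ℂ, and let p(X) = X² + aX + b and q(X) = X + c (the case d = 1, ∂ = 1). Then the numerator of the polar derivative ND(z,u) = p(z)q(z) + (u − z)·(p′(z)q(z) − p(z)q′(z)) equals, as a polynomial in z, (a − c + u)z² + (2b + 2cu)z + (bc + (ac − b)u), and its discriminant with respect to z satisfies the identity (2b + 2cu)² − 4(a − c + u)(bc + (ac − b)u) = 4·(b − ac + c²)·(u² + au + b) for all u ∈ ℂ. In particular, when b − ac + c² ≠ 0, the isodynamic points of the rational function (z² + az + b)/(z + c) are exactly the roots of its numerator z² + az + b. -/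

import Mathlib

lemma quad_double_root (A B C : ℂ) (hA : A ≠ 0) (hd : B ^ 2 - 4 * A * C = 0) :
    ∃ z : ℂ, A * z ^ 2 + B * z + C = 0 ∧ 2 * A * z + B = 0 := by
  refine ⟨-B / (2 * A), ?_, ?_⟩
  · have h2 : (2 : ℂ) * A ≠ 0 := by simp [hA]
    field_simp
    linear_combination (-1) * hd
  · have h2 : (2 : ℂ) * A ≠ 0 := by simp [hA]
    field_simp
    ring

/-- For `p(z) = z² + az + b`, `q(z) = z + c` and `d = 1`, the
numerator of the polar derivative
`ND(z,u) = p(z)q(z) + (u − z)·(p′(z)q(z) − p(z)q′(z))` equals, as a polynomial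
in `z`, `(a − c + u)z² + (2b + 2cu)z + (bc + (ac − b)u)`, whose discriminant in
`z` equals `4·(b − ac + c²)·(u² + au + b)`; in particular, when
`b − ac + c² ≠ 0`, the isodynamic points of `(z² + az + b)/(z + c)` are exactly
the roots of `z² + az + b`. -/
theorem isodynamic_points_of_degree_two_one_rational_function
    (a b c : ℂ) :
    (∀ z u : ℂ,
      (z ^ 2 + a * z + b) * (z + c)
        + (u - z) * ((2 * z + a) * (z + c) - (z ^ 2 + a * z + b))
      = (a - c + u) * z ^ 2 + (2 * b + 2 * c * u) * z
        + (b * c + (a * c - b) * u)) ∧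
    (∀ u : ℂ,
      (2 * b + 2 * c * u) ^ 2 - 4 * (a - c + u) * (b * c + (a * c - b) * u)
        = 4 * (b - a * c + c ^ 2) * (u ^ 2 + a * u + b)) ∧
    (b - a * c + c ^ 2 ≠ 0 → ∀ u : ℂ,
      (∃ z : ℂ,
        (z ^ 2 + a * z + b) * (z + c)
          + (u - z) * ((2 * z + a) * (z + c) - (z ^ 2 + a * z + b)) = 0 ∧
        2 * (a - c + u) * z + (2 * b + 2 * c * u) = 0)
      ↔ u ^ 2 + a * u + b = 0) := by
  refine ⟨fun z u => by ring, fun u => by ring, fun hK u => ?_⟩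
  constructor
  · rintro ⟨z, h1, h2⟩
    have h4 : (4 : ℂ) ≠ 0 := by norm_num
    have key : 4 * (b - a * c + c ^ 2) * (u ^ 2 + a * u + b) = 0 := by
      linear_combination (2 * (a - c + u) * z + (2 * b + 2 * c * u)) * h2
        - 4 * (a - c + u) * h1
    rcases mul_eq_zero.mp key with h | h
    · rcases mul_eq_zero.mp h with h' | h'
      · exact absurd h' h4
      · exact absurd h' hK
    · exact h
  · intro hu
    have hA : a - c + u ≠ 0 := fun h =>
      hK (by linear_combination hu - (u + c) * h)
    have hd : (2 * b + 2 * c * u) ^ 2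
        - 4 * (a - c + u) * (b * c + (a * c - b) * u) = 0 := by
      linear_combination 4 * (b - a * c + c ^ 2) * hu
    obtain ⟨z, hz1, hz2⟩ := quad_double_root (a - c + u) (2 * b + 2 * c * u)
      (b * c + (a * c - b) * u) hA hd
    exact ⟨z, by linear_combination hz1, hz2⟩
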